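/- Let A be a finite set, θ : A → ℝ, π the softmax of θ, a₀ ∈ A, θ'(a₀) = θ(a₀) - log(1/π(a₀)), θ'(a) = θ(a) for a ≠ a₀, and π' the softmax of θ'. Then π'(a₀) - π(a₀) = -π(a₀)·(1 - π(a₀))² / (π(a₀)² - π(a₀) + 1). -/

import Mathlib

theorem stmt_7 {A : Type*} [Fintype A] (θ θ' π π' : A → ℝ) (a₀ : A)
    (hπ : ∀ a, π a = Real.exp (θ a) / ∑ a', Real.exp (θ a'))
    (hθ'0 : θ' a₀ = θ a₀ - Real.log (1 / π a₀))
    (hθ' : ∀ a ≠ a₀, θ' a = θ a)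
    (hπ' : ∀ a, π' a = Real.exp (θ' a) / ∑ a', Real.exp (θ' a')) :
    π' a₀ - π a₀ = -(π a₀ * (1 - π a₀) ^ 2) / ((π a₀) ^ 2 - π a₀ + 1) := by
  have : Nonempty A := ⟨a₀⟩
  classical
  set S : ℝ := ∑ a', Real.exp (θ a') with hS
  have hSpos : 0 < S := Finset.sum_pos (fun i _ => Real.exp_pos _) ⟨a₀, Finset.mem_univ a₀⟩
  have hp : π a₀ = Real.exp (θ a₀) / S := hπ a₀
  have hppos : 0 < π a₀ := by rw [hp]; positivity
  have hexp0 : Real.exp (θ' a₀) = Real.exp (θ a₀) * π a₀ := by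
    rw [hθ'0, one_div, Real.log_inv, sub_neg_eq_add, Real.exp_add, Real.exp_log hppos]
  have hsum' : (∑ a', Real.exp (θ' a')) = Real.exp (θ a₀) * π a₀ + (S - Real.exp (θ a₀)) := by
    rw [← Finset.add_sum_erase _ _ (Finset.mem_univ a₀), hexp0, hS,
      ← Finset.add_sum_erase _ (fun a => Real.exp (θ a)) (Finset.mem_univ a₀)]
    have : (∑ a ∈ Finset.univ.erase a₀, Real.exp (θ' a)) =
        ∑ a ∈ Finset.univ.erase a₀, Real.exp (θ a) := by
      apply Finset.sum_congr rfl
      intro a ha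
      rw [hθ' a (Finset.ne_of_mem_erase ha)]
    rw [this]; ring
  have hden : (π a₀) ^ 2 - π a₀ + 1 > 0 := by nlinarith [sq_nonneg (π a₀ - 1)]
  rw [hπ' a₀, hsum', hexp0]
  have hE : Real.exp (θ a₀) = π a₀ * S := by rw [hp]; field_simp
  rw [hE]
  have hden2 : π a₀ * S * π a₀ + (S - π a₀ * S) ≠ 0 := by
    have : π a₀ * S * π a₀ + (S - π a₀ * S) = S * ((π a₀)^2 - π a₀ + 1) := by ring
    rw [this]; exact mul_ne_zero hSpos.ne' hden.ne'
  rw [div_sub' hden2, div_eq_div_iff hden2 hden.ne']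
  ring
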